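/- Let ℱ be a family of subsets of ℝⁿ that is semi-distributive by cutting along coordinate hyperplanes: for every A ∈ ℱ and every hyperplane H = {x : x_i = a}, either A ∩ H⁺ ∈ ℱ or A ∩ H⁻ ∈ ℱ, where H⁺, H⁻ are the two closed half-spaces bounded by H. If S ∈ ℱ is bounded and nonempty, then there exists a point x̄ in the closure of S such that every neighborhood of x̄ contains some member of ℱ. -/
import Mathlib

/-- Cantor–Peano compactness property for families semi-distributive by cutting
along coordinate hyperplanes: if `ℱ` is such a family of subsets of `ℝⁿ` and
`S ∈ ℱ` is bounded and nonempty, then some point of the closure of `S` has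
members of `ℱ` in each of its neighborhoods. -/
theorem cantor_compactness_semidistributive {n : ℕ}
    (ℱ : Set (Set (Fin n → ℝ)))
    (hcut : ∀ A ∈ ℱ, ∀ (i : Fin n) (a : ℝ),
      A ∩ {x | x i ≤ a} ∈ ℱ ∨ A ∩ {x | a ≤ x i} ∈ ℱ)
    (S : Set (Fin n → ℝ)) (hS : S ∈ ℱ) (hSb : Bornology.IsBounded S)
    (hSne : S.Nonempty) :
    ∃ x ∈ closure S, ∀ U ∈ nhds x, ∃ A ∈ ℱ, A ⊆ U := by
  classical
  by_cases hE : (∅ : Set (Fin n → ℝ)) ∈ ℱ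
  · exact ⟨hSne.choose, subset_closure hSne.choose_spec,
      fun U _ => ⟨∅, hE, Set.empty_subset U⟩⟩
  rcases Nat.eq_zero_or_pos n with hn | hn
  · subst hn
    refine ⟨hSne.choose, subset_closure hSne.choose_spec,
      fun U hU => ⟨S, hS, fun y hy => ?_⟩⟩
    have : y = hSne.choose := Subsingleton.elim _ _
    rw [this]; exact mem_of_mem_nhds hU
  -- all members of ℱ are nonempty
  have hne : ∀ A ∈ ℱ, A.Nonempty := by
    intro A hA
    rcases Set.eq_empty_or_nonempty A with h | h
    · exact absurd (h ▸ hA) hE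
    · exact h
  -- initial bounding box
  obtain ⟨r, hr⟩ := hSb.subset_closedBall 0
  have hr0 : 0 ≤ r := by
    obtain ⟨x, hx⟩ := hSne
    exact dist_nonneg.trans (Metric.mem_closedBall.mp (hr hx))
  set lo0 : Fin n → ℝ := fun _ => -r with hlo0
  set hi0 : Fin n → ℝ := fun _ => r with hhi0
  have hSbox : S ⊆ Set.Icc lo0 hi0 := by
    intro x hx
    rw [Set.mem_Icc]
    constructor <;> intro j
    all_goals
      have h1 : dist (x j) ((0 : Fin n → ℝ) j) ≤ dist x 0 := dist_le_pi_dist x 0 j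
      have h2 : dist x 0 ≤ r := Metric.mem_closedBall.mp (hr hx)
      have h3 : |x j| ≤ r := by simpa [Real.dist_eq] using h1.trans h2
      rw [abs_le] at h3
    · exact h3.1
    · exact h3.2
  -- one cutting step
  have step : ∀ (i : Fin n) (A : Set (Fin n → ℝ)) (lo hi : Fin n → ℝ),
      ∃ B lo' hi', A ∈ ℱ → A ⊆ Set.Icc lo hi →
        B ∈ ℱ ∧ B ⊆ A ∧ B ⊆ Set.Icc lo' hi' ∧
        (∀ j, hi' j - lo' j ≤ hi j - lo j) ∧
        hi' i - lo' i ≤ (hi i - lo i) / 2 := by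
    intro i A lo hi
    by_cases hA : A ∈ ℱ
    · by_cases hsub : A ⊆ Set.Icc lo hi
      · have hlohi : ∀ j, lo j ≤ hi j := by
          obtain ⟨x, hx⟩ := hne A hA
          intro j
          have hx' := hsub hx
          rw [Set.mem_Icc] at hx'
          exact (hx'.1 j).trans (hx'.2 j)
        set m := (lo i + hi i) / 2 with hm
        rcases hcut A hA i m with h | h
        · refine ⟨A ∩ {x | x i ≤ m}, lo, Function.update hi i m, fun _ _ => ?_⟩
          refine ⟨h, Set.inter_subset_left, ?_, ?_, ?_⟩
          · intro x hx
            have hxA := hsub hx.1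
            rw [Set.mem_Icc] at hxA ⊢
            refine ⟨hxA.1, fun j => ?_⟩
            rcases eq_or_ne j i with rfl | hj
            · simpa using hx.2
            · simpa [Function.update_apply, hj] using hxA.2 j
          · intro j
            rcases eq_or_ne j i with rfl | hj
            · simp only [Function.update_self]
              have := hlohi j
              rw [hm]; linarith
            · simp [Function.update_apply, hj]
          · simp only [Function.update_self]
            have := hlohi i
            rw [hm]; linarith
        · refine ⟨A ∩ {x | m ≤ x i}, Function.update lo i m, hi, fun _ _ => ?_⟩
          refine ⟨h, Set.inter_subset_left, ?_, ?_, ?_⟩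
          · intro x hx
            have hxA := hsub hx.1
            rw [Set.mem_Icc] at hxA ⊢
            refine ⟨fun j => ?_, hxA.2⟩
            rcases eq_or_ne j i with rfl | hj
            · simpa using hx.2
            · simpa [Function.update_apply, hj] using hxA.1 j
          · intro j
            rcases eq_or_ne j i with rfl | hj
            · simp only [Function.update_self]
              have := hlohi j
              rw [hm]; linarith
            · simp [Function.update_apply, hj]
          · simp only [Function.update_self]
            have := hlohi i
            rw [hm]; linarith
      · exact ⟨A, lo, hi, fun _ h => absurd h hsub⟩
    · exact ⟨A, lo, hi, fun h => absurd h hA⟩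
  choose stepB steplo stephi hstep using step
  -- the iterated bisection sequence
  let f : ℕ → Set (Fin n → ℝ) × (Fin n → ℝ) × (Fin n → ℝ) :=
    fun k => Nat.rec (S, lo0, hi0)
      (fun k p => (stepB ⟨k % n, Nat.mod_lt k hn⟩ p.1 p.2.1 p.2.2,
                   steplo ⟨k % n, Nat.mod_lt k hn⟩ p.1 p.2.1 p.2.2,
                   stephi ⟨k % n, Nat.mod_lt k hn⟩ p.1 p.2.1 p.2.2)) k
  have hf0 : f 0 = (S, lo0, hi0) := rfl
  have hfs : ∀ k, f (k + 1) =
      (stepB ⟨k % n, Nat.mod_lt k hn⟩ (f k).1 (f k).2.1 (f k).2.2,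
       steplo ⟨k % n, Nat.mod_lt k hn⟩ (f k).1 (f k).2.1 (f k).2.2,
       stephi ⟨k % n, Nat.mod_lt k hn⟩ (f k).1 (f k).2.1 (f k).2.2) := fun k => rfl
  have inv : ∀ k, (f k).1 ∈ ℱ ∧ (f k).1 ⊆ Set.Icc (f k).2.1 (f k).2.2 := by
    intro k
    induction k with
    | zero => exact ⟨hS, hSbox⟩
    | succ k ih =>
      have h := hstep ⟨k % n, Nat.mod_lt k hn⟩ (f k).1 (f k).2.1 (f k).2.2 ih.1 ih.2
      rw [hfs k]
      exact ⟨h.1, h.2.2.1⟩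
  have hchain : ∀ k, (f (k + 1)).1 ⊆ (f k).1 := by
    intro k
    have h := hstep ⟨k % n, Nat.mod_lt k hn⟩ (f k).1 (f k).2.1 (f k).2.2 (inv k).1 (inv k).2
    rw [hfs k]
    exact h.2.1
  have hsubS : ∀ k, (f k).1 ⊆ S := by
    intro k
    induction k with
    | zero => exact fun _ h => h
    | succ k ih => exact (hchain k).trans ih
  -- widths
  set w : ℕ → Fin n → ℝ := fun k j => (f k).2.2 j - (f k).2.1 j with hw
  have hw_mono : ∀ k j, w (k + 1) j ≤ w k j := by
    intro k j
    have h := hstep ⟨k % n, Nat.mod_lt k hn⟩ (f k).1 (f k).2.1 (f k).2.2 (inv k).1 (inv k).2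
    have := h.2.2.2.1 j
    rw [hw]
    simp only [hfs k]
    exact this
  have hw_anti : ∀ k k' j, k ≤ k' → w k' j ≤ w k j := by
    intro k k' j hk
    induction k' with
    | zero => simp_all
    | succ k' ih =>
      rcases Nat.lt_or_ge k (k' + 1) with h | h
      · exact (hw_mono k' j).trans (ih (Nat.lt_succ_iff.mp h))
      · have : k = k' + 1 := le_antisymm hk h
        rw [this]
  have hw_cut : ∀ k, w (k + 1) ⟨k % n, Nat.mod_lt k hn⟩ ≤
      w k ⟨k % n, Nat.mod_lt k hn⟩ / 2 := by
    intro k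
    have h := hstep ⟨k % n, Nat.mod_lt k hn⟩ (f k).1 (f k).2.1 (f k).2.2 (inv k).1 (inv k).2
    have := h.2.2.2.2
    rw [hw]
    simp only [hfs k]
    linarith
  have hw_pow : ∀ (m : ℕ) (j : Fin n), w (n * m) j ≤ 2 * r / 2 ^ m := by
    intro m
    induction m with
    | zero =>
      intro j
      simp only [Nat.mul_zero, pow_zero, div_one, hw, hf0]
      simp [hlo0, hhi0]
      ring_nf
      linarith
    | succ m ih =>
      intro j
      have hjn : (j : ℕ) < n := j.isLt
      have hmod : (n * m + (j : ℕ)) % n = (j : ℕ) := by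
        rw [Nat.add_comm, Nat.add_mul_mod_self_left, Nat.mod_eq_of_lt hjn]
      have hfin : (⟨(n * m + (j : ℕ)) % n, Nat.mod_lt _ hn⟩ : Fin n) = j := by
        ext; simp [hmod]
      have h1 : w (n * m + (j : ℕ) + 1) j ≤ w (n * m + (j : ℕ)) j / 2 := by
        have := hw_cut (n * m + (j : ℕ))
        rwa [hfin] at this
      have hle : n * m + (j : ℕ) + 1 ≤ n * (m + 1) := by
        rw [Nat.mul_succ, Nat.add_assoc]
        exact Nat.add_le_add_left hjn (n * m)
      have h2 : w (n * (m + 1)) j ≤ w (n * m + (j : ℕ) + 1) j :=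
        hw_anti _ _ _ hle
      have h3 : w (n * m + (j : ℕ)) j ≤ w (n * m) j := hw_anti _ _ _ (Nat.le_add_right _ _)
      have h4 : w (n * m) j ≤ 2 * r / 2 ^ m := ih j
      have : (0 : ℝ) < 2 ^ m := by positivity
      have hdiv : 2 * r / 2 ^ m / 2 = 2 * r / 2 ^ (m + 1) := by
        rw [pow_succ]; ring
      have h3' : w (n * m + (j : ℕ)) j / 2 ≤ w (n * m) j / 2 := by
        gcongr
      have h4' : w (n * m) j / 2 ≤ (2 * r / 2 ^ m) / 2 := by
        gcongr
      calc w (n * (m + 1)) j ≤ w (n * m + (j : ℕ) + 1) j := h2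
        _ ≤ w (n * m + (j : ℕ)) j / 2 := h1
        _ ≤ w (n * m) j / 2 := h3'
        _ ≤ (2 * r / 2 ^ m) / 2 := h4'
        _ = 2 * r / 2 ^ (m + 1) := hdiv
  -- nested nonempty compacts
  have hcl : ∀ k, closure (f k).1 ⊆ Set.Icc (f k).2.1 (f k).2.2 :=
    fun k => closure_minimal (inv k).2 isClosed_Icc
  have hcompact : ∀ k, IsCompact (closure (f k).1) :=
    fun k => isCompact_Icc.of_isClosed_subset isClosed_closure (hcl k)
  obtain ⟨x, hx⟩ :=
    IsCompact.nonempty_iInter_of_sequence_nonempty_isCompact_isClosed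
      (fun k => closure (f k).1)
      (fun k => closure_mono (hchain k))
      (fun k => (hne _ (inv k).1).closure)
      (hcompact 0) (fun k => isClosed_closure)
  have hxk : ∀ k, x ∈ closure (f k).1 := Set.mem_iInter.mp hx
  refine ⟨x, closure_mono (hsubS 0) (hxk 0), ?_⟩
  intro U hU
  obtain ⟨ε, hε, hball⟩ := Metric.mem_nhds_iff.mp hU
  obtain ⟨m, hm⟩ := pow_unbounded_of_one_lt (2 * r / ε) (one_lt_two (α := ℝ))
  have h2m : (0 : ℝ) < 2 ^ m := by positivity
  have hlt : 2 * r / 2 ^ m < ε := by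
    rw [div_lt_iff₀ h2m]
    rw [div_lt_iff₀ hε] at hm
    linarith [mul_comm ε ((2:ℝ) ^ m)]
  refine ⟨(f (n * m)).1, (inv (n * m)).1, fun y hy => ?_⟩
  apply hball
  have hxbox := hcl (n * m) (hxk (n * m))
  have hybox := (inv (n * m)).2 hy
  rw [Set.mem_Icc] at hxbox hybox
  have hd : dist y x ≤ 2 * r / 2 ^ m := by
    rw [dist_pi_le_iff (by positivity)]
    intro j
    have h1 := hxbox.1 j
    have h2 := hxbox.2 j
    have h3 := hybox.1 j
    have h4 := hybox.2 j
    have h5 := hw_pow m j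
    rw [hw] at h5
    rw [Real.dist_eq, abs_sub_le_iff]
    constructor <;> linarith
  exact Metric.mem_ball.mpr (lt_of_le_of_lt hd hlt)
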